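/- For every convex body C ⊂ ℍ^d, the maximum of width_H(C) over all hyperplanes H supporting C equals the diameter of C. -/

import Mathlib

noncomputable section

namespace HypSpace

/-- Inverse hyperbolic cosine. -/
def arcosh (x : ℝ) : ℝ := Real.log (x + Real.sqrt (x ^ 2 - 1))

/-- The Minkowski bilinear form on `ℝ^{d+1}` (signature `(d,1)`, the last
coordinate being timelike). -/
def mink (d : ℕ) (x y : EuclideanSpace ℝ (Fin (d + 1))) : ℝ :=
  (∑ i : Fin d, x i.castSucc * y i.castSucc) - x (Fin.last d) * y (Fin.last d)

/-- The hyperboloid model of `d`-dimensional hyperbolic space: the upper sheet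
of the two-sheeted hyperboloid `mink x x = -1`. -/
def Pt (d : ℕ) : Type := {x : EuclideanSpace ℝ (Fin (d + 1)) // mink d x x = -1 ∧ 0 < x (Fin.last d)}

variable {d : ℕ}

/-- Hyperbolic distance between two points of `ℍ^d`. -/
def hdist (p q : Pt d) : ℝ := arcosh (-(mink d p.1 q.1))

/-- The geodesic segment between `a` and `b`, described metrically via betweenness
(hyperbolic space is uniquely geodesic). -/
def seg (a b : Pt d) : Set (Pt d) := {p | hdist a p + hdist p b = hdist a b}

/-- A set is (geodesically) convex if it contains the segment between any two of its points. -/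
def IsConvexSet (C : Set (Pt d)) : Prop := ∀ a ∈ C, ∀ b ∈ C, seg a b ⊆ C

/-- The convex hull: the smallest convex set containing `A`. -/
def chull (A : Set (Pt d)) : Set (Pt d) := ⋂₀ {C | IsConvexSet C ∧ A ⊆ C}

/-- The totally geodesic hyperplane with (spacelike) normal vector `v`. -/
def plane (v : EuclideanSpace ℝ (Fin (d + 1))) : Set (Pt d) := {p | mink d v p.1 = 0}

/-- A hyperplane of `ℍ^d`: the trace on the hyperboloid of a linear hyperplane
with spacelike unit normal. -/
def IsHyperplane (H : Set (Pt d)) : Prop := ∃ v, mink d v v = 1 ∧ H = plane v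

/-- Distance from a point to a set. -/
def distPS (p : Pt d) (S : Set (Pt d)) : ℝ := sInf (hdist p '' S)

/-- Distance between two sets. -/
def distSS (A B : Set (Pt d)) : ℝ := sInf {r | ∃ a ∈ A, ∃ b ∈ B, hdist a b = r}

/-- `h` is the orthogonal projection of `g` onto `H`: the point of `H`
realizing the distance from `g` to `H`.  For a hyperplane `H` with `a ∈ H`,
`IsProj b H a` also expresses that `H` is orthogonal to the segment `ab` at `a`. -/
def IsProj (g : Pt d) (H : Set (Pt d)) (h : Pt d) : Prop :=
  h ∈ H ∧ ∀ k ∈ H, hdist g h ≤ hdist g k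

/-- Two hyperplanes are ultraparallel if they are disjoint and not asymptotically
parallel (their distance is positive, i.e. they admit a common perpendicular). -/
def Ultraparallel (H J : Set (Pt d)) : Prop :=
  IsHyperplane H ∧ IsHyperplane J ∧ H ∩ J = ∅ ∧ 0 < distSS H J

/-- `p` is an interior point of `C`. -/
def IsIntr (C : Set (Pt d)) (p : Pt d) : Prop := ∃ ε > 0, ∀ q, hdist p q < ε → q ∈ C

/-- `p` is a boundary point of the (closed) set `C`. -/
def IsBdry (C : Set (Pt d)) (p : Pt d) : Prop := p ∈ C ∧ ¬ IsIntr C p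

/-- `C` is bounded. -/
def IsBddSet (C : Set (Pt d)) : Prop := ∃ R, ∀ a ∈ C, ∀ b ∈ C, hdist a b ≤ R

/-- `C` is closed. -/
def IsClosedSet (C : Set (Pt d)) : Prop :=
  ∀ p : Pt d, (∀ ε > 0, ∃ q ∈ C, hdist p q < ε) → p ∈ C

/-- A convex body: a compact (closed and bounded) convex set with nonempty interior. -/
def IsBody (C : Set (Pt d)) : Prop :=
  IsConvexSet C ∧ IsBddSet C ∧ IsClosedSet C ∧ ∃ p, IsIntr C p

/-- The hyperplane `H` supports `C`: it meets `C` but misses its interior. -/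
def Supports (H C : Set (Pt d)) : Prop :=
  IsHyperplane H ∧ (H ∩ C).Nonempty ∧ ∀ p, IsIntr C p → p ∉ H

/-- The width of `C` determined by `H`, as the maximum distance from `H`
to a point of `C`. -/
def width (H C : Set (Pt d)) : ℝ := sSup ((fun c => distPS c H) '' C)

/-- The width of `C` determined by `H`, as the distance from `H` to a farthest
supporting hyperplane of `C` ultraparallel to `H`. -/
def widthUP (H C : Set (Pt d)) : ℝ :=
  sSup {r | ∃ J, Supports J C ∧ Ultraparallel H J ∧ distSS H J = r}

/-- The thickness of `C`: the minimum width over supporting hyperplanes. -/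
def thickness (C : Set (Pt d)) : ℝ := sInf {r | ∃ H, Supports H C ∧ width H C = r}

/-- The diameter of `C`. -/
def diam (C : Set (Pt d)) : ℝ := sSup {r | ∃ a ∈ C, ∃ b ∈ C, hdist a b = r}

/-- A body of constant width `δ`. -/
def ConstWidth (W : Set (Pt d)) (δ : ℝ) : Prop :=
  IsBody W ∧ ∀ H, Supports H W → width H W = δ

/-- A complete set of diameter `δ`. -/
def CompleteSet (C : Set (Pt d)) (δ : ℝ) : Prop :=
  diam C = δ ∧ ∀ x, x ∉ C → diam (C ∪ {x}) > δ

/-- A body of constant diameter `δ`. -/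
def ConstDiam (C : Set (Pt d)) (δ : ℝ) : Prop :=
  diam C = δ ∧ ∀ p, IsBdry C p → ∃ p' ∈ C, hdist p p' = δ



section Aux
variable {d : ℕ}




lemma one_le_aux {x : ℝ} (hx : 1 ≤ x) : 1 ≤ x + Real.sqrt (x ^ 2 - 1) := by
  have := Real.sqrt_nonneg (x ^ 2 - 1); linarith

lemma arcosh_nonneg {x : ℝ} (hx : 1 ≤ x) : 0 ≤ arcosh x :=
  Real.log_nonneg (one_le_aux hx)

lemma cosh_arcosh {x : ℝ} (hx : 1 ≤ x) : Real.cosh (arcosh x) = x := by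
  have h1 : (1:ℝ) ≤ x + Real.sqrt (x ^ 2 - 1) := one_le_aux hx
  have h0 : (0:ℝ) < x + Real.sqrt (x ^ 2 - 1) := by linarith
  have hsq : Real.sqrt (x ^ 2 - 1) ^ 2 = x ^ 2 - 1 := Real.sq_sqrt (by nlinarith)
  have hinv : (x + Real.sqrt (x ^ 2 - 1))⁻¹ = x - Real.sqrt (x ^ 2 - 1) := by
    field_simp
    nlinarith
  rw [arcosh, Real.cosh_eq, Real.exp_log h0, Real.exp_neg, Real.exp_log h0, hinv]
  ring

lemma arcosh_cosh {t : ℝ} (ht : 0 ≤ t) : arcosh (Real.cosh t) = t := by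
  have hs : Real.cosh t ^ 2 - 1 = Real.sinh t ^ 2 := by
    have := Real.cosh_sq_sub_sinh_sq t; nlinarith
  rw [arcosh, hs, Real.sqrt_sq (Real.sinh_nonneg_iff.2 ht), Real.cosh_add_sinh, Real.log_exp]

lemma arcosh_one : arcosh 1 = 0 := by
  simpa using arcosh_cosh (le_refl 0)

lemma arcosh_le_arcosh {x y : ℝ} (hx : 1 ≤ x) (hxy : x ≤ y) : arcosh x ≤ arcosh y := by
  apply Real.log_le_log (by linarith [Real.sqrt_nonneg (x^2-1)])
  have : x ^ 2 - 1 ≤ y ^ 2 - 1 := by nlinarith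
  have := Real.sqrt_le_sqrt this
  linarith

lemma arcosh_le_iff {x r : ℝ} (hx : 1 ≤ x) (hr : 0 ≤ r) :
    arcosh x ≤ r ↔ x ≤ Real.cosh r := by
  constructor
  · intro h
    have h2 : |arcosh x| ≤ |r| := by
      rw [abs_of_nonneg (arcosh_nonneg hx), abs_of_nonneg hr]; exact h
    have := Real.cosh_le_cosh.2 h2
    rwa [cosh_arcosh hx] at this
  · intro h
    calc arcosh x ≤ arcosh (Real.cosh r) := arcosh_le_arcosh hx h
    _ = r := arcosh_cosh hr










lemma mink_comm (x y : EuclideanSpace ℝ (Fin (d + 1))) : mink d x y = mink d y x := by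
  unfold mink; rw [mul_comm]; congr 1; exact Finset.sum_congr rfl fun i _ => mul_comm _ _

lemma mink_smul_left (r : ℝ) (x y : EuclideanSpace ℝ (Fin (d + 1))) :
    mink d (r • x) y = r * mink d x y := by
  unfold mink
  simp only [PiLp.smul_apply, smul_eq_mul, Finset.mul_sum, mul_sub]
  rw [Finset.sum_congr rfl fun (i : Fin d) (_ : i ∈ Finset.univ) =>
    (by ring : r * x i.castSucc * y i.castSucc = r * (x i.castSucc * y i.castSucc))]
  ring

lemma mink_add_left (x y z : EuclideanSpace ℝ (Fin (d + 1))) :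
    mink d (x + y) z = mink d x z + mink d y z := by
  unfold mink
  simp only [PiLp.add_apply, add_mul, Finset.sum_add_distrib]
  ring

lemma mink_sub_left (x y z : EuclideanSpace ℝ (Fin (d + 1))) :
    mink d (x - y) z = mink d x z - mink d y z := by
  unfold mink
  simp only [PiLp.sub_apply, sub_mul, Finset.sum_sub_distrib]
  ring

lemma mink_smul_right (r : ℝ) (x y : EuclideanSpace ℝ (Fin (d + 1))) :
    mink d x (r • y) = r * mink d x y := by
  rw [mink_comm, mink_smul_left, mink_comm]

lemma mink_add_right (x y z : EuclideanSpace ℝ (Fin (d + 1))) :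
    mink d x (y + z) = mink d x y + mink d x z := by
  rw [mink_comm, mink_add_left, mink_comm x y, mink_comm x z]

lemma mink_sub_right (x y z : EuclideanSpace ℝ (Fin (d + 1))) :
    mink d x (y - z) = mink d x y - mink d x z := by
  rw [mink_comm, mink_sub_left, mink_comm y x, mink_comm z x]

-- basic coordinate facts
lemma last_sq (p : Pt d) :
    p.1 (Fin.last d) ^ 2 = 1 + ∑ i : Fin d, p.1 i.castSucc * p.1 i.castSucc := by
  have h := p.2.1
  unfold mink at h
  nlinarith [h]

lemma one_le_last (p : Pt d) : 1 ≤ p.1 (Fin.last d) := by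
  have h := last_sq p
  have hnn : 0 ≤ ∑ i : Fin d, p.1 i.castSucc * p.1 i.castSucc :=
    Finset.sum_nonneg fun i _ => mul_self_nonneg _
  nlinarith [p.2.2]

lemma cauchy (x y : EuclideanSpace ℝ (Fin (d + 1))) :
    (∑ i : Fin d, x i.castSucc * y i.castSucc) ^ 2 ≤
      (∑ i : Fin d, x i.castSucc * x i.castSucc) *
      (∑ i : Fin d, y i.castSucc * y i.castSucc) := by
  have := Finset.sum_mul_sq_le_sq_mul_sq Finset.univ
    (fun i : Fin d => x i.castSucc) (fun i : Fin d => y i.castSucc)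
  calc (∑ i : Fin d, x i.castSucc * y i.castSucc) ^ 2
      ≤ (∑ i : Fin d, x i.castSucc ^ 2) * (∑ i : Fin d, y i.castSucc ^ 2) := this
    _ = _ := by congr 1 <;> exact Finset.sum_congr rfl fun i _ => (sq _)

lemma one_le_neg_mink (p q : Pt d) : 1 ≤ -(mink d p.1 q.1) := by
  have hc := cauchy p.1 q.1
  have hp := last_sq p
  have hq := last_sq q
  have hp1 := one_le_last p
  have hq1 := one_le_last q
  unfold mink
  set S := ∑ i : Fin d, p.1 i.castSucc * q.1 i.castSucc
  set tp := p.1 (Fin.last d)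
  set tq := q.1 (Fin.last d)
  have hT : 0 ≤ tp * tq - 1 := by nlinarith
  have hAB : S ^ 2 ≤ (tp * tq - 1) ^ 2 := by nlinarith [sq_nonneg (tp - tq)]
  have key : S ≤ tp * tq - 1 := by nlinarith [hAB, hT]
  linarith

lemma hdist_nonneg (p q : Pt d) : 0 ≤ hdist p q := arcosh_nonneg (one_le_neg_mink p q)

lemma hdist_comm (p q : Pt d) : hdist p q = hdist q p := by
  unfold hdist; rw [mink_comm]

lemma neg_mink_self (p : Pt d) : -(mink d p.1 p.1) = 1 := by rw [p.2.1]; norm_num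

lemma hdist_self (p : Pt d) : hdist p p = 0 := by
  unfold hdist; rw [neg_mink_self, arcosh_one]

lemma hdist_le_iff {p q : Pt d} {r : ℝ} (hr : 0 ≤ r) :
    hdist p q ≤ r ↔ -(mink d p.1 q.1) ≤ Real.cosh r :=
  arcosh_le_iff (one_le_neg_mink p q) hr

-- equality case: mink = -1 implies equal
lemma eq_of_neg_mink_eq_one {p q : Pt d} (h : -(mink d p.1 q.1) = 1) : p = q := by
  set u := p.1 - q.1 with hu
  have hpq : mink d p.1 q.1 = -1 := by linarith
  have huu : mink d u u = 0 := by
    rw [hu, mink_sub_left, mink_sub_right, mink_sub_right, p.2.1, q.2.1, hpq, mink_comm q.1 p.1, hpq]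
    ring
  have hpu : mink d p.1 u = 0 := by
    rw [hu, mink_sub_right, p.2.1, hpq]; ring
  -- coordinates
  have hc := cauchy p.1 u
  have hp := last_sq p
  have huu' : (∑ i : Fin d, u i.castSucc * u i.castSucc) = u (Fin.last d) * u (Fin.last d) := by
    unfold mink at huu; linarith
  have hpu' : (∑ i : Fin d, p.1 i.castSucc * u i.castSucc) = p.1 (Fin.last d) * u (Fin.last d) := by
    unfold mink at hpu; linarith
  have htu : u (Fin.last d) = 0 := by
    rw [hpu', huu'] at hc
    have hA : (∑ i : Fin d, p.1 i.castSucc * p.1 i.castSucc) = p.1 (Fin.last d) ^ 2 - 1 := by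
      linarith [hp]
    rw [hA] at hc
    have h2 : u (Fin.last d) ^ 2 ≤ 0 := by nlinarith [hc]
    have h3 : u (Fin.last d) ^ 2 = 0 := le_antisymm h2 (sq_nonneg _)
    exact pow_eq_zero_iff (by norm_num) |>.1 h3
  have hsum : (∑ i : Fin d, u i.castSucc * u i.castSucc) = 0 := by rw [huu', htu]; ring
  have hz : ∀ i : Fin d, u i.castSucc = 0 := by
    intro i
    have := (Finset.sum_eq_zero_iff_of_nonneg (fun j _ => mul_self_nonneg (u j.castSucc))).1 hsum i (Finset.mem_univ i)
    nlinarith [this]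
  have : u = 0 := by
    ext i
    induction i using Fin.lastCases with
    | last => exact htu
    | cast i => exact hz i
  have : p.1 = q.1 := by
    have := sub_eq_zero.1 this
    exact this
  exact Subtype.ext this

-- upper sheet lemma
lemma upper_sheet (p : Pt d) (x : EuclideanSpace ℝ (Fin (d + 1)))
    (hx : mink d x x = -1) (h : 0 < -(mink d p.1 x)) : 0 < x (Fin.last d) := by
  by_contra hneg
  push_neg at hneg
  have hxsq : x (Fin.last d) ^ 2 = 1 + ∑ i : Fin d, x i.castSucc * x i.castSucc := by
    unfold mink at hx; nlinarith [hx]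
  have hnn : 0 ≤ ∑ i : Fin d, x i.castSucc * x i.castSucc :=
    Finset.sum_nonneg fun i _ => mul_self_nonneg _
  have hle : x (Fin.last d) ≤ -1 := by nlinarith
  have hc := cauchy p.1 x
  have hp := last_sq p
  have hp1 := one_le_last p
  unfold mink at h
  set S := ∑ i : Fin d, p.1 i.castSucc * x i.castSucc
  set tp := p.1 (Fin.last d)
  set tx := x (Fin.last d)
  -- h : 0 < -(S - tp * tx), so S < tp * tx ≤ -1 < 0
  have hS : S < tp * tx := by linarith
  have h1 : tp * tx ≤ -1 := by nlinarith
  have h2 : S ^ 2 > (tp * tx) ^ 2 := by nlinarith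
  nlinarith [hc, hp, hxsq, h2]

-- continuity
lemma continuousAt_arcosh {x₀ : ℝ} (h : 1 ≤ x₀) : ContinuousAt arcosh x₀ := by
  have hcont : Continuous fun x : ℝ => x + Real.sqrt (x ^ 2 - 1) := by
    exact continuous_id.add (Real.continuous_sqrt.comp (by continuity))
  have h0 : x₀ + Real.sqrt (x₀ ^ 2 - 1) ≠ 0 := by
    have := one_le_aux h; linarith
  exact ContinuousAt.log hcont.continuousAt h0

lemma continuous_coord (i : Fin (d + 1)) :
    Continuous fun x : EuclideanSpace ℝ (Fin (d + 1)) => x i :=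
  (EuclideanSpace.proj i).continuous

lemma continuous_mink :
    Continuous fun xy : EuclideanSpace ℝ (Fin (d + 1)) × EuclideanSpace ℝ (Fin (d + 1)) =>
      mink d xy.1 xy.2 := by
  unfold mink
  apply Continuous.sub
  · apply continuous_finset_sum
    intro i _
    exact ((continuous_coord i.castSucc).comp continuous_fst).mul
      ((continuous_coord i.castSucc).comp continuous_snd)
  · exact ((continuous_coord (Fin.last d)).comp continuous_fst).mul
      ((continuous_coord (Fin.last d)).comp continuous_snd)

lemma tendsto_mink {ι : Type*} {l : Filter ι} {f g : ι → EuclideanSpace ℝ (Fin (d + 1))}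
    {a b : EuclideanSpace ℝ (Fin (d + 1))} (hf : Filter.Tendsto f l (nhds a))
    (hg : Filter.Tendsto g l (nhds b)) :
    Filter.Tendsto (fun n => mink d (f n) (g n)) l (nhds (mink d a b)) := by
  have hco : ∀ (i : Fin (d + 1)) (h : ι → EuclideanSpace ℝ (Fin (d + 1)))
      (c : EuclideanSpace ℝ (Fin (d + 1))), Filter.Tendsto h l (nhds c) →
      Filter.Tendsto (fun n => h n i) l (nhds (c i)) := fun i h c hh =>
    ((continuous_coord i).tendsto c).comp hh
  unfold mink
  exact Filter.Tendsto.sub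
    (tendsto_finset_sum _ fun i _ => (hco i.castSucc f a hf).mul (hco i.castSucc g b hg))
    ((hco (Fin.last d) f a hf).mul (hco (Fin.last d) g b hg))





set_option maxHeartbeats 1000000 in
lemma exists_diam_pair {C : Set (Pt d)} (hne : C.Nonempty) (hbd : IsBddSet C)
    (hcl : IsClosedSet C) :
    ∃ a ∈ C, ∃ b ∈ C, ∀ p ∈ C, ∀ q ∈ C, hdist p q ≤ hdist a b := by
  classical
  set K : Set (EuclideanSpace ℝ (Fin (d + 1))) := Subtype.val '' C with hK
  obtain ⟨p₀, hp₀⟩ := hne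
  obtain ⟨R, hR⟩ := hbd
  have hR0 : 0 ≤ R := le_trans (hdist_nonneg p₀ p₀) (hR _ hp₀ _ hp₀)
  -- K is bounded
  have hKbd : Bornology.IsBounded K := by
    rw [isBounded_iff_forall_norm_le]
    set tp := p₀.1 (Fin.last d) with htp
    have hδ : 0 < tp - Real.sqrt (tp ^ 2 - 1) := by
      have hp1 := one_le_last p₀
      have h1 : Real.sqrt (tp ^ 2 - 1) < Real.sqrt (tp ^ 2) :=
        Real.sqrt_lt_sqrt (by nlinarith) (by nlinarith)
      rw [Real.sqrt_sq (by linarith : (0:ℝ) ≤ tp)] at h1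
      linarith
    set M := Real.cosh R / (tp - Real.sqrt (tp ^ 2 - 1)) with hM
    refine ⟨Real.sqrt (2 * M ^ 2), ?_⟩
    rintro x ⟨b, hb, rfl⟩
    -- bound on last coordinate of b
    have hd1 : hdist p₀ b ≤ R := hR _ hp₀ _ hb
    have hmb : -(mink d p₀.1 b.1) ≤ Real.cosh R := (hdist_le_iff hR0).1 hd1
    have hc := cauchy p₀.1 b.1
    have hpsq := last_sq p₀
    have hbsq := last_sq b
    have hb1 := one_le_last b
    have hp1 := one_le_last p₀
    set S := ∑ i : Fin d, p₀.1 i.castSucc * b.1 i.castSucc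
    set tb := b.1 (Fin.last d)
    have hSle : S ≤ Real.sqrt (tp ^ 2 - 1) * tb := by
      have h1 : S ^ 2 ≤ (tp ^ 2 - 1) * (tb ^ 2 - 1) := by nlinarith [hc]
      have h2 : (tp ^ 2 - 1) * (tb ^ 2 - 1) ≤ (Real.sqrt (tp^2-1) * tb) ^ 2 := by
        have := Real.sq_sqrt (show (0:ℝ) ≤ tp ^ 2 - 1 by nlinarith)
        nlinarith [this, Real.sqrt_nonneg (tp^2-1)]
      have h3 : 0 ≤ Real.sqrt (tp^2-1) * tb := by positivity
      nlinarith [h1, h2, h3]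
    have htb : tb ≤ M := by
      have h4 : tp * tb - S ≤ Real.cosh R := by
        unfold mink at hmb; linarith
      have h5 : tb * (tp - Real.sqrt (tp ^ 2 - 1)) ≤ Real.cosh R := by nlinarith
      rw [hM, le_div_iff₀ hδ]; linarith
    -- bound the norm
    rw [EuclideanSpace.norm_eq]
    apply Real.sqrt_le_sqrt
    have hsplit : ∑ i : Fin (d+1), ‖b.1 i‖ ^ 2
        = (∑ i : Fin d, ‖b.1 i.castSucc‖ ^ 2) + ‖b.1 (Fin.last d)‖ ^ 2 :=
      Fin.sum_univ_castSucc _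
    rw [hsplit]
    have he : (∑ i : Fin d, ‖b.1 i.castSucc‖ ^ 2) = tb ^ 2 - 1 := by
      rw [show (∑ i : Fin d, ‖b.1 i.castSucc‖ ^ 2) = ∑ i : Fin d, b.1 i.castSucc * b.1 i.castSucc
        from Finset.sum_congr rfl fun i _ => by rw [Real.norm_eq_abs, sq_abs, sq]]
      nlinarith [hbsq]
    rw [he, Real.norm_eq_abs, sq_abs]
    nlinarith [htb, hb1, hδ, Real.cosh_pos (x := R)]
  -- K is closed
  have hKcl : IsClosed K := by
    rw [← isSeqClosed_iff_isClosed]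
    intro xs x hxs hlim
    choose ps hps hval using fun n => hxs n
    have hval' : ∀ n, xs n = (ps n).1 := fun n => (hval n).symm
    have hminkx : mink d x x = -1 := by
      have h1 : Filter.Tendsto (fun n => mink d (xs n) (xs n)) Filter.atTop (nhds (mink d x x)) :=
        tendsto_mink hlim hlim
      have h2 : ∀ n, mink d (xs n) (xs n) = -1 := fun n => by rw [hval' n]; exact (ps n).2.1
      have := tendsto_nhds_unique h1 (by simp only [h2]; exact tendsto_const_nhds)
      linarith [this]
    have hlast : 0 < x (Fin.last d) := by
      have h1 : Filter.Tendsto (fun n => xs n (Fin.last d)) Filter.atTop (nhds (x (Fin.last d))) :=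
        ((continuous_coord (Fin.last d)).tendsto x).comp hlim
      have h2 : ∀ n, 1 ≤ xs n (Fin.last d) := fun n => by rw [hval' n]; exact one_le_last (ps n)
      have := ge_of_tendsto h1 (Filter.Eventually.of_forall h2)
      linarith
    set p : Pt d := ⟨x, hminkx, hlast⟩ with hp
    refine ⟨p, hcl p ?_, rfl⟩
    intro ε hε
    have h1 : Filter.Tendsto (fun n => -(mink d x (xs n))) Filter.atTop (nhds 1) := by
      have := tendsto_mink (tendsto_const_nhds :
        Filter.Tendsto (fun _ : ℕ => x) Filter.atTop (nhds x)) hlim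
      have h2 : -(mink d x x) = 1 := by rw [hminkx]; norm_num
      simpa [h2] using this.neg
    have h3 : Filter.Tendsto (fun n => hdist p (ps n)) Filter.atTop (nhds 0) := by
      have harc : Filter.Tendsto (fun n => arcosh (-(mink d x (xs n)))) Filter.atTop (nhds (arcosh 1)) :=
        (continuousAt_arcosh le_rfl).tendsto.comp h1
      rw [arcosh_one] at harc
      convert harc using 2 with n
      unfold hdist
      rw [hval' n]
    have h4 : ∀ᶠ n in Filter.atTop, hdist p (ps n) < ε := by
      have := h3.eventually (eventually_lt_nhds hε)
      simpa using this
    obtain ⟨n, hn⟩ := h4.exists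
    exact ⟨ps n, hps n, hn⟩
  -- compactness and attainment
  have hKcp : IsCompact K := Metric.isCompact_of_isClosed_isBounded hKcl hKbd
  have hKne : K.Nonempty := ⟨p₀.1, p₀, hp₀, rfl⟩
  have hcp2 : IsCompact (K ×ˢ K) := hKcp.prod hKcp
  have hcont : ContinuousOn (fun xy : EuclideanSpace ℝ (Fin (d+1)) × EuclideanSpace ℝ (Fin (d+1)) =>
      arcosh (-(mink d xy.1 xy.2))) (K ×ˢ K) := by
    intro z hz
    obtain ⟨⟨pz, hpz, hz1⟩, ⟨qz, hqz, hz2⟩⟩ := hz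
    apply ContinuousAt.continuousWithinAt
    have hm : ContinuousAt (fun xy : EuclideanSpace ℝ (Fin (d+1)) × EuclideanSpace ℝ (Fin (d+1)) =>
        -(mink d xy.1 xy.2)) z := (tendsto_mink continuousAt_fst continuousAt_snd).neg
    have ha : ContinuousAt arcosh (-(mink d z.1 z.2)) := by
      apply continuousAt_arcosh
      have := one_le_neg_mink pz qz
      rw [hz1, hz2] at this
      exact this
    exact ContinuousAt.comp (g := arcosh) ha hm
  obtain ⟨z, hzmem, hzmax⟩ := hcp2.exists_isMaxOn (hKne.prod hKne) hcont
  obtain ⟨⟨a, ha, hza⟩, ⟨b, hb, hzb⟩⟩ := hzmem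
  refine ⟨a, ha, b, hb, fun p hp q hq => ?_⟩
  have := hzmax (Set.mk_mem_prod ⟨p, hp, rfl⟩ ⟨q, hq, rfl⟩)
  simp only at this
  unfold hdist
  rw [← hza, ← hzb] at this
  exact this

end Aux

/-- Theorem 1: the maximum width over supporting hyperplanes
equals the diameter. -/
theorem max_width_eq_diam {d : ℕ} (C : Set (Pt d)) (hC : IsBody C) :
    sSup {r | ∃ H, Supports H C ∧ width H C = r} = diam C := by
  classical
  obtain ⟨hconv, hbd, hcl, p₀, hintr⟩ := hC
  have hp₀C : p₀ ∈ C := by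
    obtain ⟨ε, hε, h⟩ := hintr
    exact h p₀ (by rw [hdist_self]; exact hε)
  have hne : C.Nonempty := ⟨p₀, hp₀C⟩
  obtain ⟨a, ha, b, hb, hmax⟩ := exists_diam_pair hne hbd hcl
  set D := hdist a b with hDdef
  have hD0 : 0 ≤ D := hdist_nonneg a b
  have hdiam : diam C = D := by
    apply le_antisymm
    · apply Real.sSup_le _ hD0
      rintro r ⟨p, hp, q, hq, rfl⟩
      exact hmax p hp q hq
    · refine le_csSup ⟨D, ?_⟩ ⟨a, ha, b, hb, rfl⟩
      rintro r ⟨p, hp, q, hq, rfl⟩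
      exact hmax p hp q hq
  have hdistPS_le : ∀ (c' : Pt d) (H : Set (Pt d)) (h₀ : Pt d), h₀ ∈ H →
      distPS c' H ≤ hdist c' h₀ := by
    intro c' H h₀ hh₀
    refine csInf_le ⟨0, ?_⟩ ⟨h₀, hh₀, rfl⟩
    rintro y ⟨h, hh, rfl⟩
    exact hdist_nonneg _ _
  have hwle : ∀ H, Supports H C → width H C ≤ D := by
    rintro H ⟨hH, ⟨h₀, hh₀H, hh₀C⟩, _⟩
    apply Real.sSup_le _ hD0
    rintro r ⟨c', hc', rfl⟩
    exact (hdistPS_le c' H h₀ hh₀H).trans (hmax c' hc' h₀ hh₀C)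
  have hub : ∀ r ∈ {r | ∃ H, Supports H C ∧ width H C = r}, r ≤ D := by
    rintro r ⟨H, hs, rfl⟩
    exact hwle H hs
  have hwge0 : ∀ H, Supports H C → 0 ≤ width H C := by
    rintro H ⟨hH, ⟨h₀, hh₀H, hh₀C⟩, _⟩
    have h1 : 0 ≤ distPS h₀ H := by
      apply Real.sInf_nonneg
      rintro y ⟨h, hh, rfl⟩
      exact hdist_nonneg _ _
    refine h1.trans (le_csSup ⟨D, ?_⟩ ⟨h₀, hh₀C, rfl⟩)
    rintro y ⟨c', hc', rfl⟩
    exact (hdistPS_le c' H h₀ hh₀H).trans (hmax c' hc' h₀ hh₀C)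
  rw [hdiam]
  rcases eq_or_lt_of_le hD0 with hD | hD
  · -- degenerate case D = 0
    rcases Set.eq_empty_or_nonempty {r | ∃ H, Supports H C ∧ width H C = r} with he | hne'
    · rw [he, Real.sSup_empty, ← hD]
    · apply le_antisymm (Real.sSup_le hub hD0)
      obtain ⟨r, hr⟩ := hne'
      obtain ⟨H, hs, hrw⟩ := hr
      have h0r : 0 ≤ r := hrw ▸ hwge0 H hs
      have := le_csSup ⟨D, hub⟩ (⟨H, hs, hrw⟩ :
        r ∈ {r | ∃ H, Supports H C ∧ width H C = r})
      linarith
  · -- main case 0 < D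
    set cv := -(mink d a.1 b.1) with hcv
    have hc1 : 1 ≤ cv := one_le_neg_mink a b
    have hDc : D = arcosh cv := rfl
    have hc1' : 1 < cv := by
      rcases eq_or_lt_of_le hc1 with h | h
      · exfalso
        have hab : a = b := eq_of_neg_mink_eq_one h.symm
        rw [hDdef, hab, hdist_self] at hD
        exact lt_irrefl 0 hD
      · exact h
    have hcD : Real.cosh D = cv := by rw [hDc]; exact cosh_arcosh hc1
    set s := Real.sqrt (cv ^ 2 - 1) with hsdef
    have hs : 0 < s := Real.sqrt_pos.2 (by nlinarith)
    have hs2 : s ^ 2 = cv ^ 2 - 1 := Real.sq_sqrt (by nlinarith)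
    have hsD : s = Real.sinh D := by
      rw [hsdef, ← hcD, show Real.cosh D ^ 2 - 1 = Real.sinh D ^ 2 by
        nlinarith [Real.cosh_sq_sub_sinh_sq D]]
      exact Real.sqrt_sq (Real.sinh_nonneg_iff.2 hD0)
    set v := s⁻¹ • (a.1 - cv • b.1) with hv
    have hmab : mink d a.1 b.1 = -cv := by rw [hcv]; ring
    have hmba : mink d b.1 a.1 = -cv := by rw [mink_comm]; exact hmab
    have hvb : mink d v b.1 = 0 := by
      rw [hv, mink_smul_left, mink_sub_left, mink_smul_left, b.2.1, hmab]; ring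
    have hbv : mink d b.1 v = 0 := by rw [mink_comm]; exact hvb
    have hvv : mink d v v = 1 := by
      rw [hv]
      simp only [mink_smul_left, mink_smul_right, mink_sub_left, mink_sub_right]
      rw [a.2.1, b.2.1, hmab, hmba]
      field_simp
      nlinarith [hs2]
    have haeq : a.1 = s • v + cv • b.1 := by
      rw [hv, smul_smul, mul_inv_cancel₀ (ne_of_gt hs), one_smul]
      abel
    have hkey : ∀ x : EuclideanSpace ℝ (Fin (d + 1)),
        mink d a.1 x = s * mink d v x + cv * mink d b.1 x := by
      intro x
      conv_lhs => rw [haeq]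
      simp only [mink_add_left, mink_smul_left]
    have hbH : b ∈ plane v := by
      show mink d v b.1 = 0
      exact hvb
    clear_value v s cv D
    -- the supporting property
    have hsup : Supports (plane v) C := by
      refine ⟨⟨v, hvv, rfl⟩, ⟨b, hbH, hb⟩, ?_⟩
      intro p hpintr hpH
      obtain ⟨ε, hε, hball⟩ := hpintr
      have hpC : p ∈ C := hball p (by rw [hdist_self]; exact hε)
      have h1 : hdist a p ≤ D := hmax a ha p hpC
      have h2 : -(mink d a.1 p.1) ≤ cv := by
        have := (hdist_le_iff hD0).1 h1
        rwa [hcD] at this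
      have hvp : mink d v p.1 = 0 := hpH
      have h3 : -(mink d a.1 p.1) = cv * (-(mink d b.1 p.1)) := by
        rw [hkey p.1, hvp]; ring
      have h4 : -(mink d b.1 p.1) ≤ 1 := by
        rw [h3] at h2; nlinarith
      have h5 : -(mink d b.1 p.1) = 1 := le_antisymm h4 (one_le_neg_mink b p)
      have hpb : b = p := eq_of_neg_mink_eq_one h5
      subst hpb
      -- now b is an interior point; derive a contradiction
      set t := ε / 2 with ht
      have ht0 : 0 < t := by rw [ht]; positivity
      clear_value t
      obtain ⟨x, hx⟩ : ∃ x : EuclideanSpace ℝ (Fin (d + 1)),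
          x = Real.cosh t • b.1 - Real.sinh t • v := ⟨_, rfl⟩
      have hxx : mink d x x = -1 := by
        rw [hx]
        simp only [mink_smul_left, mink_smul_right, mink_sub_left, mink_sub_right]
        rw [b.2.1, hvv, hbv, hvb]
        ring_nf
        linarith [Real.cosh_sq_sub_sinh_sq t]
      have hmbx : -(mink d b.1 x) = Real.cosh t := by
        rw [hx]
        simp only [mink_smul_right, mink_sub_right]
        rw [b.2.1, hbv]; ring
      have hxlast : 0 < x (Fin.last d) :=
        upper_sheet b x hxx (by rw [hmbx]; exact Real.cosh_pos t)
      set q : Pt d := ⟨x, hxx, hxlast⟩ with hq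
      have hdq : hdist b q = t := by
        show arcosh (-(mink d b.1 x)) = t
        rw [hmbx]; exact arcosh_cosh (le_of_lt ht0)
      have hqC : q ∈ C := hball q (by rw [hdq]; linarith)
      have hmax' : hdist a q ≤ D := hmax a ha q hqC
      have hvx : mink d v x = -Real.sinh t := by
        rw [hx]
        simp only [mink_smul_right, mink_sub_right]
        rw [hvb, hvv]; ring
      have hmaq : -(mink d a.1 x) = Real.cosh (D + t) := by
        have hbx : mink d b.1 x = -Real.cosh t := by linarith [hmbx]
        rw [hkey x, hvx, hbx, Real.cosh_add, hsD, ← hcD]; ring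
      have hdaq : hdist a q = D + t := by
        show arcosh (-(mink d a.1 x)) = D + t
        rw [hmaq]; exact arcosh_cosh (by linarith)
      rw [hdaq] at hmax'
      linarith
    -- the width equals D
    have hwidth : width (plane v) C = D := by
      apply le_antisymm (hwle _ hsup)
      have hdps : distPS a (plane v) = D := by
        refine le_antisymm ?_ ?_
        · rw [hDdef]; exact hdistPS_le a (plane v) b hbH
        show D ≤ sInf (hdist a '' plane v)
        have hmem : hdist a b ∈ hdist a '' plane v := ⟨b, hbH, rfl⟩
        apply le_csInf ⟨_, hmem⟩
        rintro y ⟨h, hhH, rfl⟩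
        have hvh : mink d v h.1 = 0 := hhH
        have h1 : cv ≤ -(mink d a.1 h.1) := by
          have h2 : -(mink d a.1 h.1) = cv * (-(mink d b.1 h.1)) := by
            rw [hkey h.1, hvh]; ring
          nlinarith [one_le_neg_mink b h]
        calc D = arcosh cv := hDc
          _ ≤ arcosh (-(mink d a.1 h.1)) := arcosh_le_arcosh hc1 h1
          _ = hdist a h := rfl
      have hba : BddAbove ((fun c' => distPS c' (plane v)) '' C) := by
        refine ⟨D, ?_⟩
        rintro y ⟨c', hc', rfl⟩
        exact (hdistPS_le c' (plane v) b hbH).trans (hmax c' hc' b hb)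
      have h2 : distPS a (plane v) ≤ width (plane v) C := le_csSup hba ⟨a, ha, rfl⟩
      rw [hdps] at h2
      exact h2
    exact le_antisymm (Real.sSup_le hub hD0)
      (le_csSup ⟨D, hub⟩ ⟨plane v, hsup, hwidth⟩)

end HypSpace
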